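/- Let f : Y → X be a continuous surjection between compact Hausdorff spaces with X of infinite weight. Then there exist a compact Hausdorff space Z and continuous surjections g : Y → Z and h : Z → X with f = h ∘ g such that the weight of Z equals the weight of X, and moreover: if Y is hereditarily indecomposable then Z is hereditarily indecomposable, and if Y has dimension at most one in the sense that for all closed A, B, C ⊆ Y with A ∩ B ∩ C = ∅ there exist closed Y₀, Y₁, Y₂ with A ⊆ Y₀, B ⊆ Y₁, C ⊆ Y₂, Y₀ ∩ Y₁ ∩ Y₂ = ∅ and Y₀ ∪ Y₁ ∪ Y₂ = Y, then Z has the same property. -/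

import Mathlib

universe u

/-- A space is hereditarily indecomposable if whenever two subcontinua
(nonempty compact connected subsets) intersect, one is contained in the other. -/
def HereditarilyIndecomposable (X : Type*) [TopologicalSpace X] : Prop :=
  ∀ K L : Set X, IsCompact K → IsConnected K → IsCompact L → IsConnected L →
    (K ∩ L).Nonempty → K ⊆ L ∨ L ⊆ K

/-- Dimension at most one, phrased via closed covers. -/
def DimLeOne (Y : Type*) [TopologicalSpace Y] : Prop :=
  ∀ A B C : Set Y, IsClosed A → IsClosed B → IsClosed C → A ∩ B ∩ C = ∅ →
    ∃ Y₀ Y₁ Y₂ : Set Y, IsClosed Y₀ ∧ IsClosed Y₁ ∧ IsClosed Y₂ ∧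
      A ⊆ Y₀ ∧ B ⊆ Y₁ ∧ C ⊆ Y₂ ∧ Y₀ ∩ Y₁ ∩ Y₂ = ∅ ∧ Y₀ ∪ Y₁ ∪ Y₂ = Set.univ

/-- The weight of a topological space: the least cardinality of a base for its topology. -/
noncomputable def weight (X : Type u) [TopologicalSpace X] : Cardinal.{u} :=
  ⨅ B : {B : Set (Set X) // TopologicalSpace.IsTopologicalBasis B}, Cardinal.mk B.1

open TopologicalSpace Set Function

set_option linter.unusedSectionVars false
set_option maxHeartbeats 1000000

lemma weight_le {X : Type u} [TopologicalSpace X] {B : Set (Set X)}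
    (hB : IsTopologicalBasis B) : weight X ≤ Cardinal.mk B := by
  exact ciInf_le' _ (⟨B, hB⟩ : {B : Set (Set X) // IsTopologicalBasis B})

lemma exists_basis_eq_weight (X : Type u) [TopologicalSpace X] :
    ∃ B : Set (Set X), IsTopologicalBasis B ∧ Cardinal.mk B = weight X := by
  have hne : (Set.range fun B : {B : Set (Set X) // IsTopologicalBasis B} =>
      Cardinal.mk B.1).Nonempty :=
    ⟨_, ⟨⟨{U | IsOpen U}, isTopologicalBasis_opens⟩, rfl⟩⟩
  have h := csInf_mem hne
  obtain ⟨⟨B, hB⟩, hEq⟩ := h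
  exact ⟨B, hB, hEq⟩

lemma finite_of_weight_lt_aleph0 {X : Type u} [TopologicalSpace X] [T2Space X]
    (h : weight X < Cardinal.aleph0) : Finite X := by
  obtain ⟨B, hB, hcard⟩ := exists_basis_eq_weight X
  rw [← hcard] at h
  have : Finite B := Cardinal.lt_aleph0_iff_finite.mp h
  have inj : Function.Injective (fun x : X => {b : B | x ∈ (b : Set X)}) := by
    intro x y hxy
    by_contra hne
    obtain ⟨u, v, hu, hv, hx, hy, huv⟩ := t2_separation hne
    obtain ⟨b, hbB, hxb, hbu⟩ := hB.exists_subset_of_mem_open hx hu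
    have : y ∈ b := by
      have := congrArg (fun S => (⟨b, hbB⟩ : B) ∈ S) hxy
      simpa [hxb] using this
    exact absurd (huv.le_bot ⟨hbu this, hy⟩) (by simp)
  exact Finite.of_injective _ inj

lemma weight_lt_aleph0_of_finite {X : Type u} [TopologicalSpace X] [Finite X] :
    weight X < Cardinal.aleph0 := by
  refine lt_of_le_of_lt (weight_le isTopologicalBasis_opens) ?_
  refine lt_of_le_of_lt (Cardinal.mk_subtype_le _) ?_
  rw [Cardinal.mk_set]
  exact Cardinal.power_lt_aleph0 (by exact_mod_cast Cardinal.nat_lt_aleph0 2)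
    (Cardinal.lt_aleph0_iff_finite.mpr ‹_›)

lemma weight_le_of_surj {Z X : Type u} [TopologicalSpace Z] [TopologicalSpace X]
    [CompactSpace Z] [T2Space X] (h : Z → X) (hc : Continuous h)
    (hs : Surjective h) : weight X ≤ max Cardinal.aleph0 (weight Z) := by
  classical
  obtain ⟨B, hB, hcard⟩ := exists_basis_eq_weight Z
  have hclosed : IsClosedMap h := hc.isClosedMap
  set D : Finset B → Set X := fun s => (h '' (⋃ b ∈ s, (b : Set Z))ᶜ)ᶜ with hD
  have hDbasis : IsTopologicalBasis (Set.range D) := by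
    refine isTopologicalBasis_of_isOpen_of_nhds ?_ ?_
    · rintro _ ⟨s, rfl⟩
      refine (hclosed _ ?_).isOpen_compl
      exact (isOpen_biUnion fun b _ => hB.isOpen b.2).isClosed_compl
    · intro x O hxO hO
      have hfiber : IsCompact (h ⁻¹' {x}) := (isClosed_singleton.preimage hc).isCompact
      obtain ⟨S, hSB, hSU⟩ := hB.open_eq_sUnion (hO.preimage hc)
      have hcov : h ⁻¹' {x} ⊆ ⋃ i : S, (i : Set Z) := by
        intro z hz
        have : z ∈ h ⁻¹' O := by
          simp only [mem_preimage, mem_singleton_iff] at hz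
          simp [mem_preimage, hz, hxO]
        rw [hSU] at this
        obtain ⟨t, htS, hzt⟩ := this
        exact mem_iUnion.mpr ⟨⟨t, htS⟩, hzt⟩
      obtain ⟨t, ht⟩ := hfiber.elim_finite_subcover (fun i : S => (i : Set Z))
        (fun i => hB.isOpen (hSB i.2)) hcov
      set s : Finset B := t.image (fun i => (⟨i.1, hSB i.2⟩ : B)) with hs'
      have hWsub : (⋃ b ∈ s, (b : Set Z)) ⊆ h ⁻¹' O := by
        intro z hz
        simp only [mem_iUnion] at hz
        obtain ⟨b, hb, hzb⟩ := hz
        rw [hSU]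
        simp only [hs', Finset.mem_image] at hb
        obtain ⟨i, _, rfl⟩ := hb
        exact ⟨i.1, i.2, hzb⟩
      have hWsup : h ⁻¹' {x} ⊆ ⋃ b ∈ s, (b : Set Z) := by
        intro z hz
        obtain ⟨i, hit, hzi⟩ := mem_iUnion₂.mp (ht hz)
        exact mem_iUnion₂.mpr ⟨⟨i.1, hSB i.2⟩, Finset.mem_image_of_mem _ hit, hzi⟩
      refine ⟨D s, ⟨s, rfl⟩, ?_, ?_⟩
      · intro hmem
        obtain ⟨z, hz, hzx⟩ := hmem
        exact hz (hWsup (by simp [hzx]))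
      · intro x' hx'
        obtain ⟨z, hzx'⟩ := hs x'
        have hzW : z ∈ ⋃ b ∈ s, (b : Set Z) := by
          by_contra hzW
          exact hx' ⟨z, hzW, hzx'⟩
        have := hWsub hzW
        rw [mem_preimage, hzx'] at this
        exact this
  refine le_trans (weight_le hDbasis) ?_
  refine le_trans (Cardinal.mk_range_le) ?_
  rcases finite_or_infinite B with hf | hi
  · haveI := hf
    exact le_trans (Cardinal.mk_le_aleph0) (le_max_left _ _)
  · rw [Cardinal.mk_finset_of_infinite, hcard]
    exact le_max_right _ _





section Clopen
variable {W : Type*} [TopologicalSpace W] [CompactSpace W] [T2Space W]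

lemma exists_clopen_of_component_disjoint (y : W) {B : Set W} (hB : IsClosed B)
    (h : connectedComponent y ∩ B = ∅) :
    ∃ Z : Set W, IsClopen Z ∧ y ∈ Z ∧ Z ∩ B = ∅ := by
  classical
  have hB' : B ∩ ⋂ (s : {Z : Set W // IsClopen Z ∧ y ∈ Z}), (s : Set W) = ∅ := by
    rw [← connectedComponent_eq_iInter_isClopen y, inter_comm]
    exact h
  obtain ⟨u, hu⟩ := hB.isCompact.elim_finite_subfamily_closed _
    (fun s : {Z : Set W // IsClopen Z ∧ y ∈ Z} => s.2.1.isClosed) hB'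
  refine ⟨⋂ s ∈ u, (s : Set W), ?_, ?_, ?_⟩
  · exact isClopen_biInter_finset (fun s _ => s.2.1)
  · exact mem_iInter₂.mpr fun s _ => s.2.2
  · rw [inter_comm]
    exact hu
end Clopen

section Crooked
variable {Y : Type u} [TopologicalSpace Y] [CompactSpace Y] [T2Space Y]

lemma ccIn_isCompact {K : Set Y} (hK : IsClosed K) {a : Y} (ha : a ∈ K) :
    IsCompact (connectedComponentIn K a) := by
  haveI : CompactSpace K := isCompact_iff_compactSpace.mp hK.isCompact
  rw [connectedComponentIn_eq_image ha]
  exact (isClosed_connectedComponent.isCompact).image continuous_subtype_val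

/-- In a compact Hausdorff space, given a closed set `S` and a closed set `T` disjoint from
all components (within `S`) of points of a compact set `A ⊆ S`, there is a relatively clopen
subset of `S` containing `A` and disjoint from `T`. -/
lemma exists_rel_clopen {S A T : Set Y} (hS : IsClosed S) (hA : IsClosed A) (hAS : A ⊆ S)
    (hT : IsClosed T)
    (hcomp : ∀ a ∈ A, connectedComponentIn S a ∩ T = ∅) :
    ∃ E O : Set Y, IsOpen O ∧ E = S ∩ O ∧ IsClosed E ∧ A ⊆ E ∧ E ∩ T = ∅ := by
  classical
  haveI : CompactSpace S := isCompact_iff_compactSpace.mp hS.isCompact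
  set A' : Set S := Subtype.val ⁻¹' A with hA'
  set T' : Set S := Subtype.val ⁻¹' T with hT'
  have hT'c : IsClosed T' := hT.preimage continuous_subtype_val
  have key : ∀ a : A', connectedComponent (a : S) ∩ T' = ∅ := by
    rintro ⟨a, haA⟩
    have h1 := hcomp a haA
    rw [connectedComponentIn_eq_image (hAS haA)] at h1
    ext x
    simp only [mem_inter_iff, mem_empty_iff_false, iff_false, not_and]
    intro hx hxT
    have : (x : Y) ∈ (Subtype.val '' connectedComponent (⟨a, hAS haA⟩ : S)) ∩ T :=
      ⟨⟨x, hx, rfl⟩, hxT⟩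
    rw [h1] at this
    exact this
  choose Zf hZf1 hZf2 hZf3 using fun a : A' =>
    exists_clopen_of_component_disjoint (a : S) hT'c (key a)
  have hA'c : IsCompact A' := (hA.preimage continuous_subtype_val).isCompact
  have hcov : A' ⊆ ⋃ a : A', Zf a := fun x hx => mem_iUnion.mpr ⟨⟨x, hx⟩, hZf2 ⟨x, hx⟩⟩
  obtain ⟨t, ht⟩ := hA'c.elim_finite_subcover _ (fun a => (hZf1 a).isOpen) hcov
  set E' : Set S := ⋃ a ∈ t, Zf a with hE'
  have hE'clopen : IsClopen E' := isClopen_biUnion_finset (fun a _ => hZf1 a)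
  obtain ⟨O, hO, hOE⟩ := isOpen_induced_iff.mp hE'clopen.isOpen
  refine ⟨Subtype.val '' E', O, hO, ?_, ?_, ?_, ?_⟩
  · rw [← hOE, Subtype.image_preimage_coe]
  · exact (hE'clopen.isClosed.isCompact.image continuous_subtype_val).isClosed
  · intro a haA
    exact ⟨⟨a, hAS haA⟩, ht (show (⟨a, hAS haA⟩ : S) ∈ A' from haA), rfl⟩
  · ext x
    simp only [mem_inter_iff, mem_empty_iff_false, iff_false, not_and]
    rintro ⟨x', hx', rfl⟩ hxT
    obtain ⟨a, hat, hxa⟩ := mem_iUnion₂.mp hx'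
    have : x' ∈ Zf a ∩ T' := ⟨hxa, hxT⟩
    rw [hZf3 a] at this
    exact this
lemma ccIn_subset_N {L B : Set Y} {b : Y} (hb : b ∈ L) (hbB : b ∈ B) :
    connectedComponentIn L b ⊆ {y | y ∈ L ∧ (connectedComponentIn L y ∩ B).Nonempty} := by
  intro z hz
  have hzL : z ∈ L := connectedComponentIn_subset L b hz
  refine ⟨hzL, ⟨b, ?_, hbB⟩⟩
  rw [← connectedComponentIn_eq hz]
  exact mem_connectedComponentIn hb

lemma crooked_partition (hHI : HereditarilyIndecomposable Y)
    {A B P Q : Set Y} (hA : IsClosed A) (hB : IsClosed B) (hP : IsClosed P) (hQ : IsClosed Q)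
    (hAB : A ∩ B = ∅) (hAP : A ∩ P = ∅) (hBQ : B ∩ Q = ∅) :
    ∃ Y₁ Y₂ Y₃ : Set Y, IsClosed Y₁ ∧ IsClosed Y₂ ∧ IsClosed Y₃ ∧
      Y₁ ∪ Y₂ ∪ Y₃ = univ ∧ A ⊆ Y₁ ∧ B ⊆ Y₃ ∧ Y₁ ∩ Y₃ = ∅ ∧
      Y₁ ∩ Y₂ ∩ Q = ∅ ∧ Y₂ ∩ Y₃ ∩ P = ∅ := by
  have hsub1 : A ⊆ (P ∪ B)ᶜ := by
    intro x hx hmem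
    rcases hmem with h | h
    · have : x ∈ A ∩ P := ⟨hx, h⟩
      rw [hAP] at this; exact this
    · have : x ∈ A ∩ B := ⟨hx, h⟩
      rw [hAB] at this; exact this
  obtain ⟨U₀, hU₀o, hAU₀, hU₀c⟩ :=
    normal_exists_closure_subset hA (hP.union hB).isOpen_compl hsub1
  have hsub2 : B ⊆ (Q ∪ A ∪ closure U₀)ᶜ := by
    intro x hx hmem
    rcases hmem with (h | h) | h
    · have : x ∈ B ∩ Q := ⟨hx, h⟩
      rw [hBQ] at this; exact this
    · have : x ∈ A ∩ B := ⟨h, hx⟩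
      rw [hAB] at this; exact this
    · exact (hU₀c h) (Or.inr hx)
  obtain ⟨V₀, hV₀o, hBV₀, hV₀c⟩ :=
    normal_exists_closure_subset hB (((hQ.union hA).union isClosed_closure).isOpen_compl) hsub2
  set K : Set Y := V₀ᶜ with hKdef
  set L : Set Y := U₀ᶜ with hLdef
  have hKclosed : IsClosed K := hV₀o.isClosed_compl
  have hLclosed : IsClosed L := hU₀o.isClosed_compl
  have hAK : A ⊆ K := fun a ha hmem =>
    (hV₀c (subset_closure hmem)) (Or.inl (Or.inr ha))
  have hBL : B ⊆ L := fun b hb hmem =>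
    (hU₀c (subset_closure hmem)) (Or.inr hb)
  set N : Set Y := {y | y ∈ L ∧ (connectedComponentIn L y ∩ B).Nonempty} with hNdef
  have hNL : N ⊆ L := fun y hy => hy.1
  have hBN : B ⊆ N := fun b hb => ⟨hBL hb, ⟨b, mem_connectedComponentIn (hBL hb), hb⟩⟩
  haveI : CompactSpace L := isCompact_iff_compactSpace.mp hLclosed.isCompact
  have hNclosed : IsClosed N := by
    rw [← isOpen_compl_iff]
    rw [isOpen_iff_forall_mem_open]
    intro y hy
    by_cases hyL : y ∈ L
    · have hcc : connectedComponentIn L y ∩ B = ∅ := by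
        by_contra hne
        exact hy ⟨hyL, nonempty_iff_ne_empty.mpr hne⟩
      have hcc' : connectedComponent (⟨y, hyL⟩ : L) ∩ (Subtype.val ⁻¹' B) = ∅ := by
        rw [connectedComponentIn_eq_image hyL] at hcc
        ext x
        simp only [mem_inter_iff, mem_empty_iff_false, iff_false, not_and]
        intro hx hxB
        have : (x : Y) ∈ (Subtype.val '' connectedComponent (⟨y, hyL⟩ : L)) ∩ B :=
          ⟨⟨x, hx, rfl⟩, hxB⟩
        rw [hcc] at this
        exact this
      obtain ⟨Z', hZ'clopen, hyZ', hZ'B⟩ := exists_clopen_of_component_disjoint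
        (⟨y, hyL⟩ : L) (hB.preimage continuous_subtype_val) hcc'
      obtain ⟨O, hO, hOZ⟩ := isOpen_induced_iff.mp hZ'clopen.isOpen
      refine ⟨O, ?_, hO, by rw [← hOZ] at hyZ'; exact hyZ'⟩
      intro w hwO hwN
      obtain ⟨hwL, hwB⟩ := hwN
      have hwZ' : (⟨w, hwL⟩ : L) ∈ Z' := by rw [← hOZ]; exact hwO
      have hsub : connectedComponentIn L w ⊆ Subtype.val '' Z' := by
        rw [connectedComponentIn_eq_image hwL]
        exact image_mono (hZ'clopen.connectedComponent_subset hwZ')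
      obtain ⟨b'', hb''cc, hb''B⟩ := hwB
      obtain ⟨b₀, hb₀Z', hb₀⟩ := hsub hb''cc
      have : b₀ ∈ Z' ∩ (Subtype.val ⁻¹' B) := ⟨hb₀Z', by rw [mem_preimage, hb₀]; exact hb''B⟩
      rw [hZ'B] at this
      exact this
    · exact ⟨Lᶜ, fun w hw hwN => hw (hNL hwN), hLclosed.isOpen_compl, hyL⟩
  have hKey : ∀ a ∈ A, connectedComponentIn K a ∩ N = ∅ := by
    intro a ha
    rw [eq_empty_iff_forall_notMem]
    rintro y ⟨hyC, hyL, hyne⟩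
    obtain ⟨b', hb'D, hb'B⟩ := hyne
    have haK : a ∈ K := hAK ha
    have hC : IsCompact (connectedComponentIn K a) := ccIn_isCompact hKclosed haK
    have hCc : IsConnected (connectedComponentIn K a) :=
      isConnected_connectedComponentIn_iff.mpr haK
    have hD : IsCompact (connectedComponentIn L y) := ccIn_isCompact hLclosed hyL
    have hDc : IsConnected (connectedComponentIn L y) :=
      isConnected_connectedComponentIn_iff.mpr hyL
    have hne : (connectedComponentIn K a ∩ connectedComponentIn L y).Nonempty :=
      ⟨y, hyC, mem_connectedComponentIn hyL⟩
    rcases hHI _ _ hC hCc hD hDc hne with hsub | hsub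
    · have : a ∈ L := connectedComponentIn_subset L y (hsub (mem_connectedComponentIn haK))
      exact this (hAU₀ ha)
    · have : b' ∈ K := connectedComponentIn_subset K a (hsub hb'D)
      exact this (hBV₀ hb'B)
  obtain ⟨E, OE, hOE, hEeq, hEclosed, hAE, hEN⟩ :=
    exists_rel_clopen hKclosed hA hAK hNclosed hKey
  have hKey2 : ∀ b ∈ B, connectedComponentIn L b ∩ E = ∅ := by
    intro b hb
    rw [eq_empty_iff_forall_notMem]
    rintro z ⟨hzD, hzE⟩
    have hzN : z ∈ N := ccIn_subset_N (hBL hb) hb hzD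
    have : z ∈ E ∩ N := ⟨hzE, hzN⟩
    rw [hEN] at this
    exact this
  obtain ⟨F, OF, hOF, hFeq, hFclosed, hBF, hFE⟩ :=
    exists_rel_clopen hLclosed hB hBL hEclosed hKey2
  refine ⟨E, closure ((E ∪ F)ᶜ), F, hEclosed, isClosed_closure, hFclosed, ?_, hAE, hBF, ?_, ?_, ?_⟩
  · apply eq_univ_of_forall
    intro x
    by_cases hx : x ∈ E ∪ F
    · rcases hx with h | h
      · exact Or.inl (Or.inl h)
      · exact Or.inr h
    · exact Or.inl (Or.inr (subset_closure hx))
  · rw [eq_empty_iff_forall_notMem]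
    rintro x ⟨hxE, hxF⟩
    have : x ∈ F ∩ E := ⟨hxF, hxE⟩
    rw [hFE] at this
    exact this
  · rw [eq_empty_iff_forall_notMem]
    rintro x ⟨⟨hxE, hxcl⟩, hxQ⟩
    have hxV₀ : x ∈ closure V₀ := by
      rw [mem_closure_iff] at hxcl ⊢
      intro o ho hxo
      have hxOE : x ∈ OE := (hEeq ▸ hxE).2
      obtain ⟨w, ⟨hwo, hwOE⟩, hwc⟩ := hxcl (o ∩ OE) (ho.inter hOE) ⟨hxo, hxOE⟩
      have hwV₀ : w ∈ V₀ := by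
        by_contra hwV
        exact hwc (Or.inl (hEeq ▸ ⟨hwV, hwOE⟩))
      exact ⟨w, hwo, hwV₀⟩
    exact (hV₀c hxV₀) (Or.inl (Or.inl hxQ))
  · rw [eq_empty_iff_forall_notMem]
    rintro x ⟨⟨hxcl, hxF⟩, hxP⟩
    have hxU₀ : x ∈ closure U₀ := by
      rw [mem_closure_iff] at hxcl ⊢
      intro o ho hxo
      have hxOF : x ∈ OF := (hFeq ▸ hxF).2
      obtain ⟨w, ⟨hwo, hwOF⟩, hwc⟩ := hxcl (o ∩ OF) (ho.inter hOF) ⟨hxo, hxOF⟩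
      have hwU₀ : w ∈ U₀ := by
        by_contra hwU
        exact hwc (Or.inr (hFeq ▸ ⟨hwU, hwOF⟩))
      exact ⟨w, hwo, hwU₀⟩
    exact (hU₀c hxU₀) (Or.inl hxP)
end Crooked




def zset {Y : Type u} (v : Y → ℝ) : Set Y := {y | v y = 0}
def lset {Y : Type u} (v : Y → ℝ) : Set Y := {y | v y ≤ 0}

section ZeroSets
variable {Y : Type u} [TopologicalSpace Y] [CompactSpace Y] [T2Space Y]



lemma zset_closed {v : Y → ℝ} (hv : Continuous v) : IsClosed (zset v) :=
  isClosed_eq hv continuous_const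

lemma zero_set_swell {S W : Set Y} (hS : IsClosed S) (hW : IsOpen W) (hSW : S ⊆ W) :
    ∃ v : Y → ℝ, Continuous v ∧ S ⊆ zset v ∧ zset v ⊆ W := by
  obtain ⟨φ, h0, h1, -⟩ := exists_continuous_zero_one_of_isClosed hS hW.isClosed_compl
    (Set.disjoint_left.mpr fun {a} ha hna => hna (hSW ha))
  refine ⟨fun y => max (φ y - 1/2) 0, (φ.continuous.sub continuous_const).max continuous_const,
    ?_, ?_⟩
  · intro y hy
    have h0' : φ y = 0 := h0 hy
    show max (φ y - 1/2) 0 = 0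
    rw [h0']
    norm_num
  · intro y hy
    by_contra hyW
    have h1' : φ y = 1 := h1 hyW
    have : max (φ y - 1/2) 0 = 0 := hy
    rw [h1'] at this
    norm_num at this

lemma dim_zero_witnesses (hdim : DimLeOne Y) {A B C : Set Y}
    (hA : IsClosed A) (hB : IsClosed B) (hC : IsClosed C) (hABC : A ∩ B ∩ C = ∅) :
    ∃ v₀ v₁ v₂ : Y → ℝ, Continuous v₀ ∧ Continuous v₁ ∧ Continuous v₂ ∧
      A ⊆ zset v₀ ∧ B ⊆ zset v₁ ∧ C ⊆ zset v₂ ∧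
      zset v₀ ∪ zset v₁ ∪ zset v₂ = univ ∧ zset v₀ ∩ zset v₁ ∩ zset v₂ = ∅ := by
  obtain ⟨Y₀, Y₁, Y₂, h₀, h₁, h₂, hA₀, hB₁, hC₂, hint, hcov⟩ := hdim A B C hA hB hC hABC
  obtain ⟨v₀, hv₀, hY₀, hW₀⟩ := zero_set_swell h₀ (h₁.inter h₂).isOpen_compl
    (fun x hx hmem => by
      have : x ∈ Y₀ ∩ Y₁ ∩ Y₂ := ⟨⟨hx, hmem.1⟩, hmem.2⟩
      rw [hint] at this; exact this)
  obtain ⟨v₁, hv₁, hY₁, hW₁⟩ := zero_set_swell h₁ ((zset_closed hv₀).inter h₂).isOpen_compl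
    (fun x hx hmem => hW₀ hmem.1 ⟨hx, hmem.2⟩)
  obtain ⟨v₂, hv₂, hY₂, hW₂⟩ := zero_set_swell h₂
    ((zset_closed hv₀).inter (zset_closed hv₁)).isOpen_compl
    (fun x hx hmem => hW₁ hmem.2 ⟨hmem.1, hx⟩)
  refine ⟨v₀, v₁, v₂, hv₀, hv₁, hv₂, subset_trans hA₀ hY₀, subset_trans hB₁ hY₁,
    subset_trans hC₂ hY₂, ?_, ?_⟩
  · apply eq_univ_of_univ_subset
    rw [← hcov]
    exact union_subset_union (union_subset_union hY₀ hY₁) hY₂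
  · rw [eq_empty_iff_forall_notMem]
    rintro x ⟨⟨hx₀, hx₁⟩, hx₂⟩
    exact hW₂ hx₂ ⟨hx₀, hx₁⟩

lemma hi_zero_witnesses (hHI : HereditarilyIndecomposable Y)
    {A B P Q : Set Y} (hA : IsClosed A) (hB : IsClosed B) (hP : IsClosed P) (hQ : IsClosed Q)
    (hAB : A ∩ B = ∅) (hAP : A ∩ P = ∅) (hBQ : B ∩ Q = ∅) :
    ∃ w₁ w₂ w₃ : Y → ℝ, Continuous w₁ ∧ Continuous w₂ ∧ Continuous w₃ ∧
      A ⊆ zset w₁ ∧ B ⊆ zset w₃ ∧ zset w₁ ∪ zset w₂ ∪ zset w₃ = univ ∧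
      zset w₁ ∩ zset w₃ = ∅ ∧ zset w₁ ∩ zset w₂ ∩ Q = ∅ ∧ zset w₂ ∩ zset w₃ ∩ P = ∅ := by
  obtain ⟨Y₁, Y₂, Y₃, h₁, h₂, h₃, hcov, hAY, hBY, h13, h12Q, h23P⟩ :=
    crooked_partition hHI hA hB hP hQ hAB hAP hBQ
  obtain ⟨w₁, hw₁, hY₁, hW₁⟩ := zero_set_swell h₁ (h₃.union (h₂.inter hQ)).isOpen_compl
    (fun x hx hmem => by
      rcases hmem with h | h
      · have : x ∈ Y₁ ∩ Y₃ := ⟨hx, h⟩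
        rw [h13] at this; exact this
      · have : x ∈ Y₁ ∩ Y₂ ∩ Q := ⟨⟨hx, h.1⟩, h.2⟩
        rw [h12Q] at this; exact this)
  obtain ⟨w₃, hw₃, hY₃, hW₃⟩ := zero_set_swell h₃
    ((zset_closed hw₁).union (h₂.inter hP)).isOpen_compl
    (fun x hx hmem => by
      rcases hmem with h | h
      · exact hW₁ h (Or.inl hx)
      · have : x ∈ Y₂ ∩ Y₃ ∩ P := ⟨⟨h.1, hx⟩, h.2⟩
        rw [h23P] at this; exact this)
  obtain ⟨w₂, hw₂, hY₂, hW₂⟩ := zero_set_swell h₂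
    (((zset_closed hw₁).inter hQ).union ((zset_closed hw₃).inter hP)).isOpen_compl
    (fun x hx hmem => by
      rcases hmem with h | h
      · exact hW₁ h.1 (Or.inr ⟨hx, h.2⟩)
      · exact hW₃ h.1 (Or.inr ⟨hx, h.2⟩))
  refine ⟨w₁, w₂, w₃, hw₁, hw₂, hw₃, subset_trans hAY hY₁, subset_trans hBY hY₃, ?_, ?_, ?_, ?_⟩
  · apply eq_univ_of_univ_subset
    rw [← hcov]
    exact union_subset_union (union_subset_union hY₁ hY₂) hY₃
  · rw [eq_empty_iff_forall_notMem]
    rintro x ⟨hx₁, hx₃⟩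
    exact hW₃ hx₃ (Or.inl hx₁)
  · rw [eq_empty_iff_forall_notMem]
    rintro x ⟨⟨hx₁, hx₂⟩, hxQ⟩
    exact hW₂ hx₂ (Or.inl ⟨hx₁, hxQ⟩)
  · rw [eq_empty_iff_forall_notMem]
    rintro x ⟨⟨hx₂, hx₃⟩, hxP⟩
    exact hW₂ hx₂ (Or.inr ⟨hx₃, hxP⟩)
end ZeroSets



namespace LSF
open scoped Classical
variable {Y : Type u} [TopologicalSpace Y]

def DWit (t : ((Y→ℝ)×(Y→ℝ)×(Y→ℝ))) : Prop :=
  ∃ w : (Y→ℝ)×(Y→ℝ)×(Y→ℝ), Continuous w.1 ∧ Continuous w.2.1 ∧ Continuous w.2.2 ∧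
    lset t.1 ⊆ zset w.1 ∧ lset t.2.1 ⊆ zset w.2.1 ∧ lset t.2.2 ⊆ zset w.2.2 ∧
    zset w.1 ∪ zset w.2.1 ∪ zset w.2.2 = univ ∧ zset w.1 ∩ zset w.2.1 ∩ zset w.2.2 = ∅

def HWit (t : ((Y→ℝ)×(Y→ℝ)×(Y→ℝ)×(Y→ℝ))) : Prop :=
  ∃ w : (Y→ℝ)×(Y→ℝ)×(Y→ℝ), Continuous w.1 ∧ Continuous w.2.1 ∧ Continuous w.2.2 ∧
    lset t.1 ⊆ zset w.1 ∧ lset t.2.1 ⊆ zset w.2.2 ∧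
    zset w.1 ∪ zset w.2.1 ∪ zset w.2.2 = univ ∧
    zset w.1 ∩ zset w.2.2 = ∅ ∧
    zset w.1 ∩ zset w.2.1 ∩ lset t.2.2.2 = ∅ ∧
    zset w.2.1 ∩ zset w.2.2 ∩ lset t.2.2.1 = ∅

noncomputable def dpick (t : ((Y→ℝ)×(Y→ℝ)×(Y→ℝ))) : (Y→ℝ)×(Y→ℝ)×(Y→ℝ) :=
  if h : DWit t then h.choose else ⟨fun _ => 0, fun _ => 0, fun _ => 0⟩

noncomputable def hpick (t : ((Y→ℝ)×(Y→ℝ)×(Y→ℝ)×(Y→ℝ))) : (Y→ℝ)×(Y→ℝ)×(Y→ℝ) :=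
  if h : HWit t then h.choose else ⟨fun _ => 0, fun _ => 0, fun _ => 0⟩

lemma dpick_continuous (t : ((Y→ℝ)×(Y→ℝ)×(Y→ℝ))) :
    Continuous (dpick t).1 ∧ Continuous (dpick t).2.1 ∧ Continuous (dpick t).2.2 := by
  unfold dpick
  split_ifs with h
  · exact ⟨h.choose_spec.1, h.choose_spec.2.1, h.choose_spec.2.2.1⟩
  · exact ⟨continuous_const, continuous_const, continuous_const⟩

lemma hpick_continuous (t : ((Y→ℝ)×(Y→ℝ)×(Y→ℝ)×(Y→ℝ))) :
    Continuous (hpick t).1 ∧ Continuous (hpick t).2.1 ∧ Continuous (hpick t).2.2 := by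
  unfold hpick
  split_ifs with h
  · exact ⟨h.choose_spec.1, h.choose_spec.2.1, h.choose_spec.2.2.1⟩
  · exact ⟨continuous_const, continuous_const, continuous_const⟩

lemma dpick_spec {t : ((Y→ℝ)×(Y→ℝ)×(Y→ℝ))} (h : DWit t) :
    lset t.1 ⊆ zset (dpick t).1 ∧ lset t.2.1 ⊆ zset (dpick t).2.1 ∧
    lset t.2.2 ⊆ zset (dpick t).2.2 ∧
    zset (dpick t).1 ∪ zset (dpick t).2.1 ∪ zset (dpick t).2.2 = univ ∧
    zset (dpick t).1 ∩ zset (dpick t).2.1 ∩ zset (dpick t).2.2 = ∅ := by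
  unfold dpick
  rw [dif_pos h]
  exact ⟨h.choose_spec.2.2.2.1, h.choose_spec.2.2.2.2.1, h.choose_spec.2.2.2.2.2.1,
    h.choose_spec.2.2.2.2.2.2.1, h.choose_spec.2.2.2.2.2.2.2⟩

lemma hpick_spec {t : ((Y→ℝ)×(Y→ℝ)×(Y→ℝ)×(Y→ℝ))} (h : HWit t) :
    lset t.1 ⊆ zset (hpick t).1 ∧ lset t.2.1 ⊆ zset (hpick t).2.2 ∧
    zset (hpick t).1 ∪ zset (hpick t).2.1 ∪ zset (hpick t).2.2 = univ ∧
    zset (hpick t).1 ∩ zset (hpick t).2.2 = ∅ ∧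
    zset (hpick t).1 ∩ zset (hpick t).2.1 ∩ lset t.2.2.2 = ∅ ∧
    zset (hpick t).2.1 ∩ zset (hpick t).2.2 ∩ lset t.2.2.1 = ∅ := by
  unfold hpick
  rw [dif_pos h]
  exact ⟨h.choose_spec.2.2.2.1, h.choose_spec.2.2.2.2.1, h.choose_spec.2.2.2.2.2.1,
    h.choose_spec.2.2.2.2.2.2.1, h.choose_spec.2.2.2.2.2.2.2.1,
    h.choose_spec.2.2.2.2.2.2.2.2⟩

noncomputable def step (G : Set (Y→ℝ)) : Set (Y→ℝ) :=
  G ∪ (range fun p : G × G => p.1.1 ⊔ p.2.1)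
    ∪ (range fun p : G × G => p.1.1 ⊓ p.2.1)
    ∪ (range fun p : G × ℚ => p.1.1 + fun _ => (p.2 : ℝ))
    ∪ (range fun p : G => -p.1)
    ∪ (range fun q : ULift.{u} ℚ => (fun _ => (q.down : ℝ) : Y → ℝ))
    ∪ (range fun t : G × G × G => (dpick (t.1.1, t.2.1.1, t.2.2.1)).1)
    ∪ (range fun t : G × G × G => (dpick (t.1.1, t.2.1.1, t.2.2.1)).2.1)
    ∪ (range fun t : G × G × G => (dpick (t.1.1, t.2.1.1, t.2.2.1)).2.2)
    ∪ (range fun t : G × G × G × G => (hpick (t.1.1, t.2.1.1, t.2.2.1.1, t.2.2.2.1)).1)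
    ∪ (range fun t : G × G × G × G => (hpick (t.1.1, t.2.1.1, t.2.2.1.1, t.2.2.2.1)).2.1)
    ∪ (range fun t : G × G × G × G => (hpick (t.1.1, t.2.1.1, t.2.2.1.1, t.2.2.2.1)).2.2)

lemma subset_step (G : Set (Y→ℝ)) : G ⊆ step G := by
  intro x hx
  unfold step
  exact Or.inl (Or.inl (Or.inl (Or.inl (Or.inl (Or.inl (Or.inl (Or.inl (Or.inl (Or.inl (Or.inl hx))))))))))

noncomputable def FF (G₀ : Set (Y→ℝ)) : ℕ → Set (Y→ℝ)
  | 0 => G₀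
  | (n+1) => step (FF G₀ n)

noncomputable def Ffinal (G₀ : Set (Y→ℝ)) : Set (Y→ℝ) := ⋃ n : ℕ, FF G₀ n

lemma FF_mono (G₀ : Set (Y→ℝ)) : Monotone (FF G₀) := by
  apply monotone_nat_of_le_succ
  intro n
  exact subset_step _

lemma mem_Ffinal {G₀ : Set (Y→ℝ)} {u : Y→ℝ} (h : u ∈ Ffinal G₀) : ∃ n, u ∈ FF G₀ n := by
  simpa [Ffinal] using h

lemma FF_subset_Ffinal {G₀ : Set (Y→ℝ)} (n : ℕ) : FF G₀ n ⊆ Ffinal G₀ :=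
  subset_iUnion (FF G₀) n

lemma Ffinal_sup {G₀ : Set (Y→ℝ)} {u v : Y→ℝ} (hu : u ∈ Ffinal G₀) (hv : v ∈ Ffinal G₀) :
    u ⊔ v ∈ Ffinal G₀ := by
  obtain ⟨m, hm⟩ := mem_Ffinal hu
  obtain ⟨n, hn⟩ := mem_Ffinal hv
  apply FF_subset_Ffinal (max m n + 1)
  have hm' : u ∈ FF G₀ (max m n) := FF_mono G₀ (le_max_left m n) hm
  have hn' : v ∈ FF G₀ (max m n) := FF_mono G₀ (le_max_right m n) hn
  exact Or.inl (Or.inl (Or.inl (Or.inl (Or.inl (Or.inl (Or.inl (Or.inl (Or.inl (Or.inl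
    (Or.inr ⟨(⟨u, hm'⟩, ⟨v, hn'⟩), rfl⟩))))))))))

lemma Ffinal_inf {G₀ : Set (Y→ℝ)} {u v : Y→ℝ} (hu : u ∈ Ffinal G₀) (hv : v ∈ Ffinal G₀) :
    u ⊓ v ∈ Ffinal G₀ := by
  obtain ⟨m, hm⟩ := mem_Ffinal hu
  obtain ⟨n, hn⟩ := mem_Ffinal hv
  apply FF_subset_Ffinal (max m n + 1)
  have hm' : u ∈ FF G₀ (max m n) := FF_mono G₀ (le_max_left m n) hm
  have hn' : v ∈ FF G₀ (max m n) := FF_mono G₀ (le_max_right m n) hn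
  exact Or.inl (Or.inl (Or.inl (Or.inl (Or.inl (Or.inl (Or.inl (Or.inl (Or.inl
    (Or.inr ⟨(⟨u, hm'⟩, ⟨v, hn'⟩), rfl⟩)))))))))

lemma Ffinal_addQ {G₀ : Set (Y→ℝ)} {u : Y→ℝ} (hu : u ∈ Ffinal G₀) (q : ℚ) :
    (u + fun _ => (q:ℝ)) ∈ Ffinal G₀ := by
  obtain ⟨m, hm⟩ := mem_Ffinal hu
  apply FF_subset_Ffinal (m + 1)
  exact Or.inl (Or.inl (Or.inl (Or.inl (Or.inl (Or.inl (Or.inl (Or.inl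
    (Or.inr ⟨(⟨u, hm⟩, q), rfl⟩))))))))

lemma Ffinal_neg {G₀ : Set (Y→ℝ)} {u : Y→ℝ} (hu : u ∈ Ffinal G₀) :
    (-u) ∈ Ffinal G₀ := by
  obtain ⟨m, hm⟩ := mem_Ffinal hu
  apply FF_subset_Ffinal (m + 1)
  exact Or.inl (Or.inl (Or.inl (Or.inl (Or.inl (Or.inl (Or.inl
    (Or.inr ⟨⟨u, hm⟩, rfl⟩)))))))

lemma Ffinal_const (G₀ : Set (Y→ℝ)) (q : ℚ) : (fun _ => (q:ℝ) : Y → ℝ) ∈ Ffinal G₀ := by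
  apply FF_subset_Ffinal 1
  exact Or.inl (Or.inl (Or.inl (Or.inl (Or.inl (Or.inl
    (Or.inr ⟨ULift.up q, rfl⟩))))))

lemma Ffinal_dpick {G₀ : Set (Y→ℝ)} {u v w : Y→ℝ} (hu : u ∈ Ffinal G₀)
    (hv : v ∈ Ffinal G₀) (hw : w ∈ Ffinal G₀) :
    (dpick (u,v,w)).1 ∈ Ffinal G₀ ∧ (dpick (u,v,w)).2.1 ∈ Ffinal G₀ ∧
      (dpick (u,v,w)).2.2 ∈ Ffinal G₀ := by
  obtain ⟨m, hm⟩ := mem_Ffinal hu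
  obtain ⟨n, hn⟩ := mem_Ffinal hv
  obtain ⟨k, hk⟩ := mem_Ffinal hw
  set N := max m (max n k) with hN
  have hm' : u ∈ FF G₀ N := FF_mono G₀ (le_max_left _ _) hm
  have hn' : v ∈ FF G₀ N := FF_mono G₀ (le_trans (le_max_left _ _) (le_max_right m _)) hn
  have hk' : w ∈ FF G₀ N := FF_mono G₀ (le_trans (le_max_right n k) (le_max_right m _)) hk
  refine ⟨FF_subset_Ffinal (N+1) ?_, FF_subset_Ffinal (N+1) ?_, FF_subset_Ffinal (N+1) ?_⟩
  · exact Or.inl (Or.inl (Or.inl (Or.inl (Or.inl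
      (Or.inr ⟨(⟨u, hm'⟩, ⟨v, hn'⟩, ⟨w, hk'⟩), rfl⟩)))))
  · exact Or.inl (Or.inl (Or.inl (Or.inl
      (Or.inr ⟨(⟨u, hm'⟩, ⟨v, hn'⟩, ⟨w, hk'⟩), rfl⟩))))
  · exact Or.inl (Or.inl (Or.inl
      (Or.inr ⟨(⟨u, hm'⟩, ⟨v, hn'⟩, ⟨w, hk'⟩), rfl⟩)))

lemma Ffinal_hpick {G₀ : Set (Y→ℝ)} {u v w x : Y→ℝ} (hu : u ∈ Ffinal G₀)
    (hv : v ∈ Ffinal G₀) (hw : w ∈ Ffinal G₀) (hx : x ∈ Ffinal G₀) :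
    (hpick (u,v,w,x)).1 ∈ Ffinal G₀ ∧ (hpick (u,v,w,x)).2.1 ∈ Ffinal G₀ ∧
      (hpick (u,v,w,x)).2.2 ∈ Ffinal G₀ := by
  obtain ⟨m1, hm1⟩ := mem_Ffinal hu
  obtain ⟨m2, hm2⟩ := mem_Ffinal hv
  obtain ⟨m3, hm3⟩ := mem_Ffinal hw
  obtain ⟨m4, hm4⟩ := mem_Ffinal hx
  set N := max (max m1 m2) (max m3 m4) with hN
  have h1 : u ∈ FF G₀ N := FF_mono G₀ (le_trans (le_max_left _ m2) (le_max_left _ _)) hm1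
  have h2 : v ∈ FF G₀ N := FF_mono G₀ (le_trans (le_max_right m1 _) (le_max_left _ _)) hm2
  have h3 : w ∈ FF G₀ N := FF_mono G₀ (le_trans (le_max_left _ m4) (le_max_right _ _)) hm3
  have h4 : x ∈ FF G₀ N := FF_mono G₀ (le_trans (le_max_right m3 _) (le_max_right _ _)) hm4
  refine ⟨FF_subset_Ffinal (N+1) ?_, FF_subset_Ffinal (N+1) ?_, FF_subset_Ffinal (N+1) ?_⟩
  · exact Or.inl (Or.inl (Or.inr ⟨(⟨u, h1⟩, ⟨v, h2⟩, ⟨w, h3⟩, ⟨x, h4⟩), rfl⟩))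
  · exact Or.inl (Or.inr ⟨(⟨u, h1⟩, ⟨v, h2⟩, ⟨w, h3⟩, ⟨x, h4⟩), rfl⟩)
  · exact Or.inr ⟨(⟨u, h1⟩, ⟨v, h2⟩, ⟨w, h3⟩, ⟨x, h4⟩), rfl⟩

lemma Ffinal_continuous {G₀ : Set (Y→ℝ)} (hG₀ : ∀ v ∈ G₀, Continuous v) :
    ∀ v ∈ Ffinal G₀, Continuous v := by
  have key : ∀ n, ∀ v ∈ FF G₀ n, Continuous v := by
    intro n
    induction n with
    | zero => exact hG₀
    | succ n ih =>
      intro v hv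
      rcases hv with ((((((((((hv | hv) | hv) | hv) | hv) | hv) | hv) | hv) | hv) | hv) | hv) | hv
      · exact ih v hv
      · obtain ⟨p, rfl⟩ := hv
        exact ((ih _ p.1.2).max (ih _ p.2.2))
      · obtain ⟨p, rfl⟩ := hv
        exact ((ih _ p.1.2).min (ih _ p.2.2))
      · obtain ⟨p, rfl⟩ := hv
        exact ((ih _ p.1.2).add continuous_const)
      · obtain ⟨p, rfl⟩ := hv
        exact (ih _ p.2).neg
      · obtain ⟨q, rfl⟩ := hv
        exact continuous_const
      · obtain ⟨t, rfl⟩ := hv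
        exact (dpick_continuous _).1
      · obtain ⟨t, rfl⟩ := hv
        exact (dpick_continuous _).2.1
      · obtain ⟨t, rfl⟩ := hv
        exact (dpick_continuous _).2.2
      · obtain ⟨t, rfl⟩ := hv
        exact (hpick_continuous _).1
      · obtain ⟨t, rfl⟩ := hv
        exact (hpick_continuous _).2.1
      · obtain ⟨t, rfl⟩ := hv
        exact (hpick_continuous _).2.2
  intro v hv
  obtain ⟨n, hn⟩ := mem_Ffinal hv
  exact key n v hn

lemma mk_step_le {G : Set (Y→ℝ)} {κ : Cardinal.{u}} (hκ : Cardinal.aleph0 ≤ κ)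
    (hG : Cardinal.mk G ≤ κ) : Cardinal.mk (step G) ≤ κ := by
  have hGG : Cardinal.mk (G × G : Type u) ≤ κ := by
    simp only [Cardinal.mk_prod, Cardinal.lift_id, Cardinal.lift_uzero]
    calc Cardinal.mk G * Cardinal.mk G ≤ κ * κ := mul_le_mul' hG hG
    _ = κ := Cardinal.mul_eq_self hκ
  have hGQ : Cardinal.mk (G × ℚ : Type u) ≤ κ := by
    simp only [Cardinal.mk_prod, Cardinal.lift_id, Cardinal.lift_uzero, Cardinal.mk_denumerable,
      Cardinal.lift_aleph0]
    calc Cardinal.mk G * Cardinal.aleph0 ≤ κ * κ := mul_le_mul' hG hκ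
    _ = κ := Cardinal.mul_eq_self hκ
  have hG3 : Cardinal.mk (G × G × G : Type u) ≤ κ := by
    simp only [Cardinal.mk_prod, Cardinal.lift_id, Cardinal.lift_uzero]
    calc Cardinal.mk G * (Cardinal.mk G * Cardinal.mk G) ≤ κ * κ :=
          mul_le_mul' hG (by simpa only [Cardinal.mk_prod, Cardinal.lift_id, Cardinal.lift_uzero] using hGG)
    _ = κ := Cardinal.mul_eq_self hκ
  have hG4 : Cardinal.mk (G × G × G × G : Type u) ≤ κ := by
    simp only [Cardinal.mk_prod, Cardinal.lift_id, Cardinal.lift_uzero]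
    calc Cardinal.mk G * (Cardinal.mk G * (Cardinal.mk G * Cardinal.mk G)) ≤ κ * κ :=
          mul_le_mul' hG (by simpa only [Cardinal.mk_prod, Cardinal.lift_id, Cardinal.lift_uzero] using hG3)
    _ = κ := Cardinal.mul_eq_self hκ
  have hQ : Cardinal.mk (ULift.{u} ℚ) ≤ κ := by
    simp only [Cardinal.mk_uLift, Cardinal.mk_denumerable, Cardinal.lift_aleph0]
    exact hκ
  have hr : ∀ {ι : Type u} (f : ι → (Y → ℝ)), Cardinal.mk ι ≤ κ →
      Cardinal.mk (range f) ≤ κ := fun f hι => le_trans Cardinal.mk_range_le hι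
  unfold step
  refine le_trans (Cardinal.mk_union_le _ _) ?_
  have hadd : ∀ {a b : Cardinal.{u}}, a ≤ κ → b ≤ κ → a + b ≤ κ := by
    intro a b ha hb
    calc a + b ≤ κ + κ := add_le_add ha hb
    _ = κ := Cardinal.add_eq_self hκ
  refine hadd ?_ (hr _ hG4)
  refine le_trans (Cardinal.mk_union_le _ _) (hadd ?_ (hr _ hG4))
  refine le_trans (Cardinal.mk_union_le _ _) (hadd ?_ (hr _ hG4))
  refine le_trans (Cardinal.mk_union_le _ _) (hadd ?_ (hr _ hG3))
  refine le_trans (Cardinal.mk_union_le _ _) (hadd ?_ (hr _ hG3))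
  refine le_trans (Cardinal.mk_union_le _ _) (hadd ?_ (hr _ hG3))
  refine le_trans (Cardinal.mk_union_le _ _) (hadd ?_ (hr _ hQ))
  refine le_trans (Cardinal.mk_union_le _ _) (hadd ?_ (hr _ hG))
  refine le_trans (Cardinal.mk_union_le _ _) (hadd ?_ (hr _ hGQ))
  refine le_trans (Cardinal.mk_union_le _ _) (hadd ?_ (hr _ hGG))
  refine le_trans (Cardinal.mk_union_le _ _) (hadd hG (hr _ hGG))

lemma mk_Ffinal_le {G₀ : Set (Y→ℝ)} {κ : Cardinal.{u}} (hκ : Cardinal.aleph0 ≤ κ)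
    (hG : Cardinal.mk G₀ ≤ κ) : Cardinal.mk (Ffinal G₀) ≤ κ := by
  have key : ∀ n, Cardinal.mk (FF G₀ n) ≤ κ := by
    intro n
    induction n with
    | zero => exact hG
    | succ n ih => exact mk_step_le hκ ih
  have : Ffinal G₀ = ⋃ m : ULift.{u} ℕ, FF G₀ m.down := by
    apply subset_antisymm
    · intro x hx
      obtain ⟨n, hn⟩ := mem_Ffinal hx
      exact mem_iUnion.mpr ⟨ULift.up n, hn⟩
    · intro x hx
      obtain ⟨m, hm⟩ := mem_iUnion.mp hx
      exact FF_subset_Ffinal m.down hm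
  rw [this]
  refine le_trans (Cardinal.mk_iUnion_le _) ?_
  have h1 : Cardinal.mk (ULift.{u} ℕ) ≤ κ := by
    simp only [Cardinal.mk_uLift, Cardinal.mk_denumerable, Cardinal.lift_aleph0]
    exact hκ
  have h2 : ⨆ m : ULift.{u} ℕ, Cardinal.mk (FF G₀ m.down) ≤ κ := ciSup_le' fun m => key m.down
  calc Cardinal.mk (ULift.{u} ℕ) * (⨆ m : ULift.{u} ℕ, Cardinal.mk (FF G₀ m.down)) ≤ κ * κ :=
        mul_le_mul' h1 h2
  _ = κ := Cardinal.mul_eq_self hκ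

end LSF

/-- Löwenheim–Skolem type factorization: a continuous surjection between compact
Hausdorff spaces factors through a space of the same weight as the range which
inherits hereditary indecomposability and dimension at most one from the domain. -/
theorem factorization_through_small_weight (Y X : Type u) [TopologicalSpace Y]
    [TopologicalSpace X] [CompactSpace Y] [CompactSpace X] [T2Space Y] [T2Space X]
    (f : Y → X) (hfc : Continuous f) (hfs : Function.Surjective f)
    (hw : Cardinal.aleph0 ≤ weight X) :
    ∃ (Z : Type u) (_ : TopologicalSpace Z), CompactSpace Z ∧ T2Space Z ∧
      ∃ (g : Y → Z) (h : Z → X),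
        Continuous g ∧ Function.Surjective g ∧
        Continuous h ∧ Function.Surjective h ∧
        f = h ∘ g ∧ weight Z = weight X ∧
        (HereditarilyIndecomposable Y → HereditarilyIndecomposable Z) ∧
        (DimLeOne Y → DimLeOne Z) := by
  classical
  obtain ⟨BX, hBX, hBXcard⟩ := exists_basis_eq_weight X
  -- separating family on X
  set sepFun : BX × BX → (X → ℝ) := fun P =>
    if h : ∃ φ : X → ℝ, Continuous φ ∧ (∀ x ∈ closure (P.1 : Set X), φ x = 0) ∧
        (∀ x, x ∉ (P.2 : Set X) → φ x = 1) then h.choose else fun _ => 0 with hsepFun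
  have hsepCont : ∀ P, Continuous (sepFun P) := by
    intro P
    rw [hsepFun]
    dsimp only
    split_ifs with h
    · exact h.choose_spec.1
    · exact continuous_const
  have hsep : ∀ x x' : X, x ≠ x' → ∃ P, sepFun P x = 0 ∧ sepFun P x' = 1 := by
    intro x x' hxx
    have hx : x ∈ ({x'}ᶜ : Set X) := by simpa using hxx
    obtain ⟨O₂, hO₂B, hxO₂, hO₂sub⟩ := hBX.exists_subset_of_mem_open hx
      isClosed_singleton.isOpen_compl
    obtain ⟨O, hOopen, hxO, hOc⟩ := normal_exists_closure_subset isClosed_singleton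
      (hBX.isOpen hO₂B) (singleton_subset_iff.mpr hxO₂)
    obtain ⟨O₁, hO₁B, hxO₁, hO₁sub⟩ := hBX.exists_subset_of_mem_open
      (singleton_subset_iff.mp hxO) hOopen
    have hcl : closure (O₁ : Set X) ⊆ (O₂ : Set X) := subset_trans (closure_mono hO₁sub) hOc
    have hex : ∃ φ : X → ℝ, Continuous φ ∧ (∀ t ∈ closure (O₁ : Set X), φ t = 0) ∧
        (∀ t, t ∉ (O₂ : Set X) → φ t = 1) := by
      obtain ⟨φ, hφ0, hφ1, -⟩ := exists_continuous_zero_one_of_isClosed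
        (isClosed_closure (s := (O₁ : Set X))) (hBX.isOpen hO₂B).isClosed_compl
        (Set.disjoint_left.mpr fun {t} ht hc => hc (hcl ht))
      exact ⟨φ, φ.continuous, fun t ht => hφ0 ht, fun t ht => hφ1 ht⟩
    refine ⟨(⟨O₁, hO₁B⟩, ⟨O₂, hO₂B⟩), ?_, ?_⟩
    · rw [hsepFun]; dsimp only; rw [dif_pos hex]
      exact hex.choose_spec.2.1 x (subset_closure hxO₁)
    · rw [hsepFun]; dsimp only; rw [dif_pos hex]
      exact hex.choose_spec.2.2 x' (fun hc => (hO₂sub hc) rfl)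
  -- the function family
  set G₀ : Set (Y → ℝ) := range (fun P : BX × BX => sepFun P ∘ f) with hG₀
  have hG₀cont : ∀ v ∈ G₀, Continuous v := by
    rintro v ⟨P, rfl⟩
    exact (hsepCont P).comp hfc
  have hG₀card : Cardinal.mk G₀ ≤ weight X := by
    refine le_trans Cardinal.mk_range_le ?_
    simp only [Cardinal.mk_prod, Cardinal.lift_id, hBXcard]
    exact le_of_eq (Cardinal.mul_eq_self hw)
  set F : Set (Y → ℝ) := LSF.Ffinal G₀ with hF
  have hFcont : ∀ v ∈ F, Continuous v := LSF.Ffinal_continuous hG₀cont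
  have hFcard : Cardinal.mk F ≤ weight X := LSF.mk_Ffinal_le hw hG₀card
  have hlc : ∀ u : F, IsClosed (lset u.1) :=
    fun u => IsClosed.preimage (hFcont u.1 u.2) isClosed_Iic
  -- the space Z
  set e : Y → (F → ℝ) := fun y u => u.1 y with he
  have hecont : Continuous e := continuous_pi fun u => hFcont u.1 u.2
  set Zs : Set (F → ℝ) := range e with hZs
  haveI hZcomp : CompactSpace Zs := isCompact_iff_compactSpace.mp (isCompact_range hecont)
  set g : Y → Zs := fun y => ⟨e y, mem_range_self y⟩ with hgdef
  have hgc : Continuous g := hecont.subtype_mk _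
  have hgs : Surjective g := by
    rintro ⟨z, y, rfl⟩
    exact ⟨y, rfl⟩
  have hsect : ∀ z : Zs, e (Classical.choose z.2) = z.1 := fun z => Classical.choose_spec z.2
  have hval : ∀ (z : Zs) (u : F), z.1 u = u.1 (Classical.choose z.2) :=
    fun z u => (congrFun (hsect z) u).symm
  -- the map h
  have hwd : ∀ y y' : Y, e y = e y' → f y = f y' := by
    intro y y' hyy
    by_contra hne
    obtain ⟨P, hP0, hP1⟩ := hsep _ _ hne
    have hu : (sepFun P ∘ f) ∈ F := LSF.FF_subset_Ffinal 0 ⟨P, rfl⟩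
    have hcf : sepFun P (f y) = sepFun P (f y') := congrFun hyy ⟨_, hu⟩
    rw [hP0, hP1] at hcf
    norm_num at hcf
  set hmap : Zs → X := fun z => f (Classical.choose z.2) with hhmap
  have hcomm : ∀ y, hmap (g y) = f y := fun y => hwd _ _ (hsect (g y))
  have hhs : Surjective hmap := fun x => (hfs x).elim fun y hy => ⟨g y, by rw [hcomm, hy]⟩
  have hhc : Continuous hmap := by
    rw [continuous_iff_isClosed]
    intro C hC
    have himg : hmap ⁻¹' C = g '' (f ⁻¹' C) := by
      ext z
      constructor
      · intro hz
        exact ⟨Classical.choose z.2, hz, Subtype.ext (hsect z)⟩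
      · rintro ⟨y, hy, rfl⟩
        show hmap (g y) ∈ C
        rw [hcomm]
        exact hy
    rw [himg]
    exact (((hC.preimage hfc).isCompact).image hgc).isClosed
  -- sublevel sets on Z
  set ZO : F → Set Zs := fun u => {z : Zs | z.1 u ≤ 0} with hZOdef
  have hZOclosed : ∀ u, IsClosed (ZO u) := by
    intro u
    have : ZO u = (fun z : Zs => z.1 u) ⁻¹' (Iic 0) := rfl
    rw [this]
    exact IsClosed.preimage ((continuous_apply u).comp continuous_subtype_val) isClosed_Iic
  have hgZO : ∀ (u : F) (y : Y), g y ∈ ZO u ↔ u.1 y ≤ 0 := fun u y => Iff.rfl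
  have hZOval : ∀ (u : F) (z : Zs), z ∈ ZO u ↔ u.1 (Classical.choose z.2) ≤ 0 := by
    intro u z
    rw [show (z ∈ ZO u) = (z.1 u ≤ 0) from rfl, hval z u]
  -- lattice combination helpers
  have listMax : ∀ l : List (Y → ℝ), (∀ b ∈ l, b ∈ F) → ∃ v, v ∈ F ∧
      ∀ y : Y, (v y ≤ 0 ↔ ∀ b ∈ l, b y ≤ 0) := by
    intro l
    induction l with
    | nil =>
      intro _
      refine ⟨fun _ => ((-1 : ℚ) : ℝ), LSF.Ffinal_const G₀ (-1), ?_⟩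
      intro y
      constructor
      · intro _ b hb
        exact absurd hb List.not_mem_nil
      · intro _
        norm_num
    | cons b l ih =>
      intro hbl
      obtain ⟨v', hv', hsem⟩ := ih (fun c hc => hbl c (List.mem_cons_of_mem b hc))
      refine ⟨b ⊔ v', LSF.Ffinal_sup (hbl b List.mem_cons_self) hv', ?_⟩
      intro y
      rw [Pi.sup_apply, sup_le_iff]
      constructor
      · rintro ⟨h1, h2⟩ c hc
        rcases List.mem_cons.mp hc with rfl | hc
        · exact h1
        · exact (hsem y).1 h2 c hc
      · intro hall
        exact ⟨hall b List.mem_cons_self,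
          (hsem y).2 fun c hc => hall c (List.mem_cons_of_mem b hc)⟩
  have listMin : ∀ l : List (Y → ℝ), (∀ b ∈ l, b ∈ F) → ∃ v, v ∈ F ∧
      ∀ y : Y, (v y ≤ 0 ↔ ∃ b ∈ l, b y ≤ 0) := by
    intro l
    induction l with
    | nil =>
      intro _
      refine ⟨fun _ => ((1 : ℚ) : ℝ), LSF.Ffinal_const G₀ 1, ?_⟩
      intro y
      constructor
      · intro h
        norm_num at h
      · rintro ⟨b, hb, -⟩
        exact absurd hb List.not_mem_nil
    | cons b l ih =>
      intro hbl
      obtain ⟨v', hv', hsem⟩ := ih (fun c hc => hbl c (List.mem_cons_of_mem b hc))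
      refine ⟨b ⊓ v', LSF.Ffinal_inf (hbl b List.mem_cons_self) hv', ?_⟩
      intro y
      rw [Pi.inf_apply, inf_le_iff]
      constructor
      · rintro (h1 | h2)
        · exact ⟨b, List.mem_cons_self, h1⟩
        · obtain ⟨c, hc, hcy⟩ := (hsem y).1 h2
          exact ⟨c, List.mem_cons_of_mem b hc, hcy⟩
      · rintro ⟨c, hc, hcy⟩
        rcases List.mem_cons.mp hc with rfl | hc
        · exact Or.inl hcy
        · exact Or.inr ((hsem y).2 ⟨c, hc, hcy⟩)
  have bandF : ∀ (u : Y → ℝ), u ∈ F → ∀ p q : ℚ, ∃ v, v ∈ F ∧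
      ∀ y, (v y ≤ 0 ↔ (p : ℝ) ≤ u y ∧ u y ≤ (q : ℝ)) := by
    intro u hu p q
    refine ⟨((-u) + fun _ => (p : ℝ)) ⊔ (u + fun _ => ((-q : ℚ) : ℝ)),
      LSF.Ffinal_sup (LSF.Ffinal_addQ (LSF.Ffinal_neg hu) p) (LSF.Ffinal_addQ hu (-q)), ?_⟩
    intro y
    rw [Pi.sup_apply, sup_le_iff, Pi.add_apply, Pi.add_apply, Pi.neg_apply]
    push_cast
    constructor
    · rintro ⟨h1, h2⟩
      exact ⟨by linarith, by linarith⟩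
    · rintro ⟨h1, h2⟩
      exact ⟨by linarith, by linarith⟩
  -- swelling lemma on Z
  have swell : ∀ A W : Set Zs, IsClosed A → IsOpen W → A ⊆ W →
      ∃ u : F, A ⊆ ZO u ∧ ZO u ⊆ W := by
    intro A W hA hW hAW
    obtain ⟨O, hO, hOW⟩ := isOpen_induced_iff.mp hW
    have hpt : ∀ z : Zs, z ∈ A → ∃ (u : F) (Oz : Set Zs),
        IsOpen Oz ∧ z ∈ Oz ∧ Oz ⊆ ZO u ∧ ZO u ⊆ W := by
      intro z hz
      have hzO : z.1 ∈ O := by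
        have : z ∈ W := hAW hz
        rw [← hOW] at this
        exact this
      obtain ⟨I, us, hus, hpi⟩ := isOpen_pi_iff.mp hO z.1 hzO
      have hrat : ∀ i ∈ I, ∃ p q : ℚ, (p : ℝ) < z.1 i ∧ (z.1 i : ℝ) < q ∧
          Icc (p : ℝ) (q : ℝ) ⊆ us i := by
        intro i hi
        obtain ⟨hopen, hmem⟩ := hus i hi
        obtain ⟨ε, hε, hball⟩ := Metric.isOpen_iff.mp hopen _ hmem
        obtain ⟨p, hp1, hp2⟩ := exists_rat_btwn (show z.1 i - ε < z.1 i by linarith)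
        obtain ⟨q, hq1, hq2⟩ := exists_rat_btwn (show z.1 i < z.1 i + ε by linarith)
        refine ⟨p, q, hp2, hq1, ?_⟩
        intro r hr
        apply hball
        rw [Real.ball_eq_Ioo]
        exact ⟨lt_of_lt_of_le hp1 hr.1, lt_of_le_of_lt hr.2 hq2⟩
      choose pp qq hpp hqq hIcc using hrat
      have hband : ∀ i : {i : F // i ∈ I}, ∃ v, v ∈ F ∧ ∀ y,
          (v y ≤ 0 ↔ (pp i.1 i.2 : ℝ) ≤ i.1.1 y ∧ i.1.1 y ≤ (qq i.1 i.2 : ℝ)) :=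
        fun i => bandF i.1.1 i.1.2 _ _
      choose bnd hbndF hbndsem using hband
      obtain ⟨v, hvF, hvsem⟩ := listMax (I.attach.toList.map bnd) (by
        intro c hc
        obtain ⟨i, -, rfl⟩ := List.mem_map.mp hc
        exact hbndF i)
      refine ⟨⟨v, hvF⟩, {w : Zs | ∀ i : {i : F // i ∈ I},
        (pp i.1 i.2 : ℝ) < w.1 i.1 ∧ (w.1 i.1 : ℝ) < qq i.1 i.2}, ?_, ?_, ?_, ?_⟩
      · have : {w : Zs | ∀ i : {i : F // i ∈ I},
            (pp i.1 i.2 : ℝ) < w.1 i.1 ∧ (w.1 i.1 : ℝ) < qq i.1 i.2} =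
            ⋂ i : {i : F // i ∈ I}, {w : Zs |
              (pp i.1 i.2 : ℝ) < w.1 i.1 ∧ (w.1 i.1 : ℝ) < qq i.1 i.2} := by
          ext w; simp [mem_iInter]
        rw [this]
        refine isOpen_iInter_of_finite fun i => ?_
        have : {w : Zs | (pp i.1 i.2 : ℝ) < w.1 i.1 ∧ (w.1 i.1 : ℝ) < qq i.1 i.2} =
            (fun w : Zs => w.1 i.1) ⁻¹' (Ioo _ _) := rfl
        rw [this]
        exact IsOpen.preimage ((continuous_apply i.1).comp continuous_subtype_val) isOpen_Ioo
      · intro i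
        exact ⟨hpp i.1 i.2, hqq i.1 i.2⟩
      · intro w hw
        set yw := Classical.choose w.2 with hyw
        rw [hZOval]
        rw [(hvsem yw)]
        intro c hc
        obtain ⟨i, -, rfl⟩ := List.mem_map.mp hc
        rw [hbndsem i yw]
        have hwi := hw i
        have : w.1 i.1 = i.1.1 yw := hval w i.1
        rw [this] at hwi
        exact ⟨le_of_lt hwi.1, le_of_lt hwi.2⟩
      · intro w hw
        have hyw : v (Classical.choose w.2) ≤ 0 := (hZOval _ _).mp hw
        rw [hvsem] at hyw
        have hIn : ∀ i : {i : F // i ∈ I}, (pp i.1 i.2 : ℝ) ≤ w.1 i.1 ∧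
            (w.1 i.1 : ℝ) ≤ qq i.1 i.2 := by
          intro i
          have := hyw (bnd i) (List.mem_map.mpr ⟨i, by
            simp [Finset.mem_toList, Finset.mem_attach], rfl⟩)
          rw [hbndsem i] at this
          have hv2 : w.1 i.1 = i.1.1 (Classical.choose w.2) := hval w i.1
          rw [hv2]
          exact this
        rw [← hOW]
        show w.1 ∈ O
        apply hpi
        refine Set.mem_pi.mpr fun i hi => ?_
        exact hIcc i hi ⟨(hIn ⟨i, hi⟩).1, (hIn ⟨i, hi⟩).2⟩
    choose uu OO hOOopen hmemOO hOOsub hZOW using hpt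
    have hAcomp : IsCompact A := hA.isCompact
    obtain ⟨t, ht⟩ := hAcomp.elim_finite_subcover (fun a : A => OO a.1 a.2)
      (fun a => hOOopen a.1 a.2) (fun z hz => mem_iUnion.mpr ⟨⟨z, hz⟩, hmemOO z hz⟩)
    obtain ⟨v, hvF, hvsem⟩ := listMin (t.toList.map (fun a : A => (uu a.1 a.2).1)) (by
      intro c hc
      obtain ⟨a, -, rfl⟩ := List.mem_map.mp hc
      exact (uu a.1 a.2).2)
    refine ⟨⟨v, hvF⟩, ?_, ?_⟩
    · intro z hz
      obtain ⟨a, hat, hza⟩ := mem_iUnion₂.mp (ht hz)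
      have hzZO : z ∈ ZO (uu a.1 a.2) := hOOsub a.1 a.2 hza
      rw [hZOval] at hzZO ⊢
      rw [hvsem]
      exact ⟨(uu a.1 a.2).1, List.mem_map.mpr ⟨a, Finset.mem_toList.mpr hat, rfl⟩, hzZO⟩
    · intro z hz
      rw [hZOval, hvsem] at hz
      obtain ⟨c, hc, hcy⟩ := hz
      obtain ⟨a, -, rfl⟩ := List.mem_map.mp hc
      have : z ∈ ZO (uu a.1 a.2) := (hZOval _ _).mpr hcy
      exact hZOW a.1 a.2 this
  -- DimLeOne transfer
  have hdimtr : DimLeOne Y → DimLeOne Zs := by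
    intro hdim A B C hA hB hC hABC
    obtain ⟨u₁, hAu₁, hu₁sub⟩ := swell A (B ∩ C)ᶜ hA (hB.inter hC).isOpen_compl
      (fun z hz hmem => by
        have : z ∈ A ∩ B ∩ C := ⟨⟨hz, hmem.1⟩, hmem.2⟩
        rw [hABC] at this; exact this)
    obtain ⟨u₂, hBu₂, hu₂sub⟩ := swell B (ZO u₁ ∩ C)ᶜ hB
      ((hZOclosed u₁).inter hC).isOpen_compl
      (fun z hz hmem => hu₁sub hmem.1 ⟨hz, hmem.2⟩)
    obtain ⟨u₃, hCu₃, hu₃sub⟩ := swell C (ZO u₁ ∩ ZO u₂)ᶜ hC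
      ((hZOclosed u₁).inter (hZOclosed u₂)).isOpen_compl
      (fun z hz hmem => hu₂sub hmem.2 ⟨hmem.1, hz⟩)
    have hYtriple : lset u₁.1 ∩ lset u₂.1 ∩ lset u₃.1 = ∅ := by
      rw [eq_empty_iff_forall_notMem]
      rintro y ⟨⟨h1, h2⟩, h3⟩
      exact hu₃sub ((hgZO u₃ y).mpr h3) ⟨(hgZO u₁ y).mpr h1, (hgZO u₂ y).mpr h2⟩
    obtain ⟨w₁, w₂, w₃, hw₁c, hw₂c, hw₃c, hsub₁, hsub₂, hsub₃, hcov, htriple⟩ :=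
      dim_zero_witnesses hdim (hlc u₁) (hlc u₂) (hlc u₃) hYtriple
    have hDWit : LSF.DWit (u₁.1, u₂.1, u₃.1) :=
      ⟨(w₁, w₂, w₃), hw₁c, hw₂c, hw₃c, hsub₁, hsub₂, hsub₃, hcov, htriple⟩
    obtain ⟨hm₁, hm₂, hm₃⟩ := LSF.Ffinal_dpick u₁.2 u₂.2 u₃.2
    obtain ⟨hs₁, hs₂, hs₃, hscov, hstriple⟩ := LSF.dpick_spec hDWit
    set dw := LSF.dpick (u₁.1, u₂.1, u₃.1) with hdw
    have hZclosed : ∀ m : F, IsClosed {z : Zs | z.1 m = 0} := by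
      intro m
      have : {z : Zs | z.1 m = 0} = (fun z : Zs => z.1 m) ⁻¹' {0} := rfl
      rw [this]
      exact IsClosed.preimage ((continuous_apply m).comp continuous_subtype_val)
        isClosed_singleton
    refine ⟨{z : Zs | z.1 ⟨dw.1, hm₁⟩ = 0}, {z : Zs | z.1 ⟨dw.2.1, hm₂⟩ = 0},
      {z : Zs | z.1 ⟨dw.2.2, hm₃⟩ = 0}, hZclosed _, hZclosed _, hZclosed _, ?_, ?_, ?_, ?_, ?_⟩
    · intro a ha
      show a.1 ⟨dw.1, hm₁⟩ = 0
      rw [hval]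
      exact hs₁ ((hZOval u₁ a).mp (hAu₁ ha))
    · intro a ha
      show a.1 ⟨dw.2.1, hm₂⟩ = 0
      rw [hval]
      exact hs₂ ((hZOval u₂ a).mp (hBu₂ ha))
    · intro a ha
      show a.1 ⟨dw.2.2, hm₃⟩ = 0
      rw [hval]
      exact hs₃ ((hZOval u₃ a).mp (hCu₃ ha))
    · rw [eq_empty_iff_forall_notMem]
      rintro z ⟨⟨h1, h2⟩, h3⟩
      have hy : Classical.choose z.2 ∈ zset dw.1 ∩ zset dw.2.1 ∩ zset dw.2.2 := by
        refine ⟨⟨?_, ?_⟩, ?_⟩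
        · exact (hval z ⟨dw.1, hm₁⟩).symm.trans h1
        · exact (hval z ⟨dw.2.1, hm₂⟩).symm.trans h2
        · exact (hval z ⟨dw.2.2, hm₃⟩).symm.trans h3
      rw [hstriple] at hy
      exact hy
    · apply eq_univ_of_forall
      intro z
      have hy : Classical.choose z.2 ∈ zset dw.1 ∪ zset dw.2.1 ∪ zset dw.2.2 := by
        rw [hscov]; trivial
      rcases hy with (hy | hy) | hy
      · exact Or.inl (Or.inl (by show z.1 ⟨dw.1, hm₁⟩ = 0; rw [hval]; exact hy))
      · exact Or.inl (Or.inr (by show z.1 ⟨dw.2.1, hm₂⟩ = 0; rw [hval]; exact hy))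
      · exact Or.inr (by show z.1 ⟨dw.2.2, hm₃⟩ = 0; rw [hval]; exact hy)
  -- HI transfer
  have hHItr : HereditarilyIndecomposable Y → HereditarilyIndecomposable Zs := by
    intro hHI K L hKcomp hKconn hLcomp hLconn hKL
    by_contra hcon
    push_neg at hcon
    obtain ⟨hnKL, hnLK⟩ := hcon
    obtain ⟨a, haK, haL⟩ := not_subset.mp hnKL
    obtain ⟨b, hbL, hbK⟩ := not_subset.mp hnLK
    have hKcl := hKcomp.isClosed
    have hLcl := hLcomp.isClosed
    have hab : a ≠ b := fun hab => haL (hab ▸ hbL)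
    obtain ⟨vA, hAvA, hvAsub⟩ := swell {a} (L ∪ {b})ᶜ isClosed_singleton
      (hLcl.union isClosed_singleton).isOpen_compl
      (by rintro z rfl
          rintro (hz | hz)
          · exact haL hz
          · exact hab hz)
    obtain ⟨vB, hBvB, hvBsub⟩ := swell {b} (K ∪ ZO vA)ᶜ isClosed_singleton
      (hKcl.union (hZOclosed vA)).isOpen_compl
      (by rintro z rfl
          rintro (hz | hz)
          · exact hbK hz
          · exact hvAsub hz (Or.inr rfl))
    obtain ⟨vQ, hKvQ, hvQsub⟩ := swell K (ZO vB)ᶜ hKcl (hZOclosed vB).isOpen_compl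
      (fun z hz hmem => hvBsub hmem (Or.inl hz))
    obtain ⟨vP, hLvP, hvPsub⟩ := swell L (ZO vA)ᶜ hLcl (hZOclosed vA).isOpen_compl
      (fun z hz hmem => hvAsub hmem (Or.inl hz))
    have hABy : lset vA.1 ∩ lset vB.1 = ∅ := by
      rw [eq_empty_iff_forall_notMem]
      rintro y ⟨h1, h2⟩
      exact hvBsub ((hgZO vB y).mpr h2) (Or.inr ((hgZO vA y).mpr h1))
    have hAPy : lset vA.1 ∩ lset vP.1 = ∅ := by
      rw [eq_empty_iff_forall_notMem]
      rintro y ⟨h1, h2⟩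
      exact hvPsub ((hgZO vP y).mpr h2) ((hgZO vA y).mpr h1)
    have hBQy : lset vB.1 ∩ lset vQ.1 = ∅ := by
      rw [eq_empty_iff_forall_notMem]
      rintro y ⟨h1, h2⟩
      exact hvQsub ((hgZO vQ y).mpr h2) ((hgZO vB y).mpr h1)
    obtain ⟨w₁, w₂, w₃, hw₁c, hw₂c, hw₃c, hsubA, hsubB, hcov, h13, h12Q, h23P⟩ :=
      hi_zero_witnesses hHI (hlc vA) (hlc vB) (hlc vP) (hlc vQ) hABy hAPy hBQy
    have hHWit : LSF.HWit (vA.1, vB.1, vP.1, vQ.1) :=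
      ⟨(w₁, w₂, w₃), hw₁c, hw₂c, hw₃c, hsubA, hsubB, hcov, h13, h12Q, h23P⟩
    obtain ⟨hm₁, hm₂, hm₃⟩ := LSF.Ffinal_hpick vA.2 vB.2 vP.2 vQ.2
    obtain ⟨hs₁, hs₂, hscov, hs13, hs12, hs23⟩ := LSF.hpick_spec hHWit
    set hwt := LSF.hpick (vA.1, vB.1, vP.1, vQ.1) with hhwt
    set Z1 : Set Zs := {z : Zs | z.1 ⟨hwt.1, hm₁⟩ = 0} with hZ1
    set Z2 : Set Zs := {z : Zs | z.1 ⟨hwt.2.1, hm₂⟩ = 0} with hZ2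
    set Z3 : Set Zs := {z : Zs | z.1 ⟨hwt.2.2, hm₃⟩ = 0} with hZ3
    have hZclosed : ∀ m : F, IsClosed {z : Zs | z.1 m = 0} := by
      intro m
      have : {z : Zs | z.1 m = 0} = (fun z : Zs => z.1 m) ⁻¹' {0} := rfl
      rw [this]
      exact IsClosed.preimage ((continuous_apply m).comp continuous_subtype_val)
        isClosed_singleton
    have hZcov : ∀ z : Zs, z ∈ Z1 ∪ Z2 ∪ Z3 := by
      intro z
      have hy : Classical.choose z.2 ∈ zset hwt.1 ∪ zset hwt.2.1 ∪ zset hwt.2.2 := by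
        rw [hscov]; trivial
      rcases hy with (hy | hy) | hy
      · exact Or.inl (Or.inl (by show z.1 ⟨hwt.1, hm₁⟩ = 0; rw [hval]; exact hy))
      · exact Or.inl (Or.inr (by show z.1 ⟨hwt.2.1, hm₂⟩ = 0; rw [hval]; exact hy))
      · exact Or.inr (by show z.1 ⟨hwt.2.2, hm₃⟩ = 0; rw [hval]; exact hy)
    have hZ13 : ∀ z : Zs, z ∈ Z1 → z ∈ Z3 → False := by
      intro z h1 h3
      have hy : Classical.choose z.2 ∈ zset hwt.1 ∩ zset hwt.2.2 :=
        ⟨by exact (hval z ⟨hwt.1, hm₁⟩).symm.trans h1, by exact (hval z ⟨hwt.2.2, hm₃⟩).symm.trans h3⟩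
      rw [hs13] at hy
      exact hy
    have hZ12Q : ∀ z : Zs, z ∈ Z1 → z ∈ Z2 → z ∈ ZO vQ → False := by
      intro z h1 h2 hq
      have hy : Classical.choose z.2 ∈ zset hwt.1 ∩ zset hwt.2.1 ∩ lset vQ.1 :=
        ⟨⟨by exact (hval z ⟨hwt.1, hm₁⟩).symm.trans h1, by exact (hval z ⟨hwt.2.1, hm₂⟩).symm.trans h2⟩,
          (hZOval vQ z).mp hq⟩
      rw [hs12] at hy
      exact hy
    have hZ23P : ∀ z : Zs, z ∈ Z2 → z ∈ Z3 → z ∈ ZO vP → False := by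
      intro z h2 h3 hp
      have hy : Classical.choose z.2 ∈ zset hwt.2.1 ∩ zset hwt.2.2 ∩ lset vP.1 :=
        ⟨⟨by exact (hval z ⟨hwt.2.1, hm₂⟩).symm.trans h2, by exact (hval z ⟨hwt.2.2, hm₃⟩).symm.trans h3⟩,
          (hZOval vP z).mp hp⟩
      rw [hs23] at hy
      exact hy
    have haZ1 : a ∈ Z1 := by
      show a.1 ⟨hwt.1, hm₁⟩ = 0
      rw [hval]
      exact hs₁ ((hZOval vA a).mp (hAvA rfl))
    have hbZ3 : b ∈ Z3 := by
      show b.1 ⟨hwt.2.2, hm₃⟩ = 0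
      rw [hval]
      exact hs₂ ((hZOval vB b).mp (hBvB rfl))
    have hKsub : K ⊆ Z1 := by
      have hsplit := (isPreconnected_iff_subset_of_fully_disjoint_closed hKcl).mp
        hKconn.isPreconnected (K ∩ Z1) (K ∩ (Z2 ∪ Z3))
        (hKcl.inter (hZclosed _)) (hKcl.inter ((hZclosed _).union (hZclosed _)))
        (fun z hz => by
          rcases hZcov z with (h | h) | h
          · exact Or.inl ⟨hz, h⟩
          · exact Or.inr ⟨hz, Or.inl h⟩
          · exact Or.inr ⟨hz, Or.inr h⟩)
        (Set.disjoint_left.mpr (by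
          rintro z ⟨hzK, hz1⟩ ⟨-, (hz2 | hz3)⟩
          · exact hZ12Q z hz1 hz2 (hKvQ hzK)
          · exact hZ13 z hz1 hz3))
      rcases hsplit with h | h
      · exact fun z hz => (h hz).2
      · exfalso
        rcases (h haK).2 with h2 | h3
        · exact hZ12Q a haZ1 h2 (hKvQ haK)
        · exact hZ13 a haZ1 h3
    have hLsub : L ⊆ Z3 := by
      have hsplit := (isPreconnected_iff_subset_of_fully_disjoint_closed hLcl).mp
        hLconn.isPreconnected (L ∩ Z3) (L ∩ (Z1 ∪ Z2))
        (hLcl.inter (hZclosed _)) (hLcl.inter ((hZclosed _).union (hZclosed _)))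
        (fun z hz => by
          rcases hZcov z with (h | h) | h
          · exact Or.inr ⟨hz, Or.inl h⟩
          · exact Or.inr ⟨hz, Or.inr h⟩
          · exact Or.inl ⟨hz, h⟩)
        (Set.disjoint_left.mpr (by
          rintro z ⟨hzL, hz3⟩ ⟨-, (hz1 | hz2)⟩
          · exact hZ13 z hz1 hz3
          · exact hZ23P z hz2 hz3 (hLvP hzL)))
      rcases hsplit with h | h
      · exact fun z hz => (h hz).2
      · exfalso
        rcases (h hbL).2 with h1 | h2
        · exact hZ13 b h1 hbZ3
        · exact hZ23P b h2 hbZ3 (hLvP hbL)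
    obtain ⟨c, hcK, hcL⟩ := hKL
    exact hZ13 c (hKsub hcK) (hLsub hcL)
  -- weight computation
  set BZ : Set (Set Zs) := range (fun l : List (F × ℚ × ℚ) =>
    {z : Zs | ∀ t ∈ l, (t.2.1 : ℝ) < z.1 t.1 ∧ (z.1 t.1 : ℝ) < t.2.2}) with hBZdef
  have hBZbasis : IsTopologicalBasis BZ := by
    refine isTopologicalBasis_of_isOpen_of_nhds ?_ ?_
    · rintro _ ⟨l, rfl⟩
      dsimp only
      have heq : {z : Zs | ∀ t ∈ l, (t.2.1 : ℝ) < z.1 t.1 ∧ (z.1 t.1 : ℝ) < t.2.2} =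
          ⋂ t ∈ {t | t ∈ l}, {z : Zs | (t.2.1 : ℝ) < z.1 t.1 ∧ (z.1 t.1 : ℝ) < t.2.2} := by
        ext z
        constructor
        · intro h
          exact mem_iInter₂.mpr fun t ht => h t ht
        · intro h t ht
          exact mem_iInter₂.mp h t ht
      rw [heq]
      refine Set.Finite.isOpen_biInter (l.finite_toSet) ?_
      intro t ht
      have : {z : Zs | (t.2.1 : ℝ) < z.1 t.1 ∧ (z.1 t.1 : ℝ) < t.2.2} =
          (fun z : Zs => z.1 t.1) ⁻¹' (Ioo (t.2.1 : ℝ) (t.2.2 : ℝ)) := rfl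
      rw [this]
      exact IsOpen.preimage ((continuous_apply t.1).comp continuous_subtype_val) isOpen_Ioo
    · intro z W hzW hW
      obtain ⟨O, hO, hOW⟩ := isOpen_induced_iff.mp hW
      have hzO : z.1 ∈ O := by rw [← hOW] at hzW; exact hzW
      obtain ⟨I, us, hus, hpi⟩ := isOpen_pi_iff.mp hO z.1 hzO
      have hrat : ∀ i ∈ I, ∃ p q : ℚ, (p : ℝ) < z.1 i ∧ (z.1 i : ℝ) < q ∧
          Ioo (p : ℝ) (q : ℝ) ⊆ us i := by
        intro i hi
        obtain ⟨hopen, hmem⟩ := hus i hi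
        obtain ⟨ε, hε, hball⟩ := Metric.isOpen_iff.mp hopen _ hmem
        obtain ⟨p, hp1, hp2⟩ := exists_rat_btwn (show z.1 i - ε < z.1 i by linarith)
        obtain ⟨q, hq1, hq2⟩ := exists_rat_btwn (show z.1 i < z.1 i + ε by linarith)
        refine ⟨p, q, hp2, hq1, ?_⟩
        intro r hr
        apply hball
        rw [Real.ball_eq_Ioo]
        exact ⟨lt_trans hp1 hr.1, lt_trans hr.2 hq2⟩
      choose pp qq hpp hqq hIoo using hrat
      refine ⟨_, ⟨I.attach.toList.map (fun i => (i.1, pp i.1 i.2, qq i.1 i.2)), rfl⟩, ?_, ?_⟩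
      · intro t ht
        obtain ⟨i, -, rfl⟩ := List.mem_map.mp ht
        exact ⟨hpp i.1 i.2, hqq i.1 i.2⟩
      · intro w hw
        rw [← hOW]
        show w.1 ∈ O
        apply hpi
        refine Set.mem_pi.mpr fun i hi => ?_
        have ht := hw (i, pp i hi, qq i hi) (List.mem_map.mpr ⟨⟨i, hi⟩,
          Finset.mem_toList.mpr (I.mem_attach ⟨i, hi⟩), rfl⟩)
        exact hIoo i hi ⟨ht.1, ht.2⟩
  have hwZle : weight Zs ≤ weight X := by
    refine le_trans (weight_le hBZbasis) ?_
    refine le_trans Cardinal.mk_range_le ?_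
    refine le_trans (Cardinal.mk_list_le_max _) ?_
    apply max_le hw
    simp only [Cardinal.mk_prod, Cardinal.lift_id, Cardinal.lift_uzero, Cardinal.lift_mul,
      Cardinal.mk_denumerable, Cardinal.lift_aleph0]
    calc Cardinal.mk F * Cardinal.aleph0 ≤ weight X * weight X :=
          mul_le_mul' hFcard hw
    _ = weight X := Cardinal.mul_eq_self hw
  have hXinf : Infinite X := by
    by_contra hfin
    rw [not_infinite_iff_finite] at hfin
    exact absurd hw (not_le.mpr (@weight_lt_aleph0_of_finite X _ hfin))
  have hZinf : Infinite Zs := Infinite.of_surjective hmap hhs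
  have hwZge : Cardinal.aleph0 ≤ weight Zs := by
    by_contra hlt
    rw [not_le] at hlt
    have hfin : Finite Zs := finite_of_weight_lt_aleph0 hlt
    exact absurd hZinf hfin.not_infinite
  have hge : weight X ≤ weight Zs := by
    have h := weight_le_of_surj hmap hhc hhs
    rwa [max_eq_right hwZge] at h
  exact ⟨Zs, inferInstance, hZcomp, inferInstance, g, hmap, hgc, hgs, hhc, hhs,
    funext fun y => (hcomm y).symm, le_antisymm hwZle hge, hHItr, hdimtr⟩
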